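/- Let A be a ℂ-algebra with second Hochschild cohomology H²(A, A) = 0. Then every one-parameter formal deformation of A (an associative k[[h]]-algebra structure on A[[h]] reducing to A modulo h, with unit 1 ∈ A) is equivalent to the constant deformation, via an isomorphism of ℂ[[h]]-algebras inducing the identity modulo h. -/

import Mathlib

open Finset

section Helpers

variable {M : Type*} [AddCommMonoid M]

private lemma sum_filter_range (n i : ℕ) (hi : i ≤ n) (g : ℕ → M) :
    ∑ q ∈ range (n + 1 - i), g q = ∑ q ∈ range (n + 1), if i + q ≤ n then g q else 0 := by
  rw [← Finset.sum_filter]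
  apply Finset.sum_congr
  · ext q; simp only [Finset.mem_filter, Finset.mem_range]; omega
  · intros; rfl

private lemma tri_swap (n : ℕ) (h : ℕ → ℕ → M) :
    ∑ i ∈ range (n + 1), ∑ q ∈ range (n + 1 - i), h i q
      = ∑ q ∈ range (n + 1), ∑ i ∈ range (n + 1 - q), h i q := by
  have L : ∀ (h : ℕ → ℕ → M), ∑ i ∈ range (n+1), ∑ q ∈ range (n+1-i), h i q
      = ∑ i ∈ range (n+1), ∑ q ∈ range (n+1), if i + q ≤ n then h i q else 0 := by
    intro h
    refine Finset.sum_congr rfl fun i hi => ?_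
    exact sum_filter_range n i (by simpa [Nat.lt_succ_iff] using hi) _
  rw [L, L (fun q i => h i q), Finset.sum_comm]
  refine Finset.sum_congr rfl fun q _ => Finset.sum_congr rfl fun i _ => ?_
  exact if_congr (by omega) rfl rfl

private lemma sum_range_split (n : ℕ) (hn : 1 ≤ n) (f : ℕ → M) :
    ∑ i ∈ range (n + 1), f i = f 0 + (∑ i ∈ Ico 1 n, f i + f n) := by
  rw [Finset.range_eq_Ico, Finset.sum_eq_sum_Ico_succ_bot (by omega) f,
    Finset.sum_Ico_succ_top (by omega) f]

private lemma sum_range_head (n : ℕ) (hn : 1 ≤ n) (f : ℕ → M) :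
    ∑ i ∈ range n, f i = f 0 + ∑ i ∈ Ico 1 n, f i := by
  rw [Finset.range_eq_Ico, Finset.sum_eq_sum_Ico_succ_bot (by omega) f]

private lemma sum_Ico_reflect' (n : ℕ) (g : ℕ → M) :
    ∑ i ∈ Ico 1 n, g i = ∑ i ∈ Ico 1 n, g (n - i) := by
  rw [Finset.sum_Ico_eq_sum_range, Finset.sum_Ico_eq_sum_range, ← Finset.sum_range_reflect]
  refine Finset.sum_congr rfl fun j hj => ?_
  rw [Finset.mem_range] at hj
  congr 1
  omega

end Helpers

section Defs
variable {A : Type*} [Ring A] [Algebra ℂ A]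

noncomputable def fmap (μ : ℕ → A →ₗ[ℂ] A →ₗ[ℂ] A) (u : ℕ → A →ₗ[ℂ] A) (n : ℕ) :
    A →ₗ[ℂ] A →ₗ[ℂ] A :=
  (∑ i ∈ range n, (μ (n - i)).compr₂ (u i)) -
    ∑ i ∈ Ico 1 n, (LinearMap.mul ℂ A).compl₁₂ (u i) (u (n - i))

lemma fmap_apply (μ : ℕ → A →ₗ[ℂ] A →ₗ[ℂ] A) (u : ℕ → A →ₗ[ℂ] A) (n : ℕ) (a b : A) :
    fmap μ u n a b
      = (∑ i ∈ range n, u i (μ (n - i) a b)) - ∑ i ∈ Ico 1 n, u i a * u (n - i) b := by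
  simp [fmap, LinearMap.sub_apply, Finset.sum_apply, LinearMap.sum_apply,
    LinearMap.compr₂_apply, LinearMap.compl₁₂_apply, LinearMap.mul_apply']

open Classical in
noncomputable def nextU (μ : ℕ → A →ₗ[ℂ] A →ₗ[ℂ] A)
    (hH2 : ∀ f : A →ₗ[ℂ] A →ₗ[ℂ] A,
      (∀ a b c : A, a * f b c - f (a * b) c + f a (b * c) - f a b * c = 0) →
      ∃ g : A →ₗ[ℂ] A, ∀ a b : A, f a b = a * g b - g (a * b) + g a * b)
    (n : ℕ) (prev : ℕ → A →ₗ[ℂ] A) : A →ₗ[ℂ] A :=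
  if h : (∀ a b c : A, a * fmap μ prev n b c - fmap μ prev n (a * b) c
      + fmap μ prev n a (b * c) - fmap μ prev n a b * c = 0)
  then Classical.choose (hH2 (fmap μ prev n) h) else 0

noncomputable def useq (μ : ℕ → A →ₗ[ℂ] A →ₗ[ℂ] A)
    (hH2 : ∀ f : A →ₗ[ℂ] A →ₗ[ℂ] A,
      (∀ a b c : A, a * f b c - f (a * b) c + f a (b * c) - f a b * c = 0) →
      ∃ g : A →ₗ[ℂ] A, ∀ a b : A, f a b = a * g b - g (a * b) + g a * b) :
    ℕ → A →ₗ[ℂ] A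
  | 0 => LinearMap.id
  | (n + 1) => nextU μ hH2 (n + 1) (fun m => if h : m < n + 1 then useq μ hH2 m else 0)
  termination_by n => n
  decreasing_by exact h

lemma useq_zero (μ : ℕ → A →ₗ[ℂ] A →ₗ[ℂ] A)
    (hH2 : ∀ f : A →ₗ[ℂ] A →ₗ[ℂ] A,
      (∀ a b c : A, a * f b c - f (a * b) c + f a (b * c) - f a b * c = 0) →
      ∃ g : A →ₗ[ℂ] A, ∀ a b : A, f a b = a * g b - g (a * b) + g a * b) :
    useq μ hH2 0 = LinearMap.id := by
  rw [useq]

lemma useq_succ (μ : ℕ → A →ₗ[ℂ] A →ₗ[ℂ] A)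
    (hH2 : ∀ f : A →ₗ[ℂ] A →ₗ[ℂ] A,
      (∀ a b c : A, a * f b c - f (a * b) c + f a (b * c) - f a b * c = 0) →
      ∃ g : A →ₗ[ℂ] A, ∀ a b : A, f a b = a * g b - g (a * b) + g a * b) (n : ℕ) :
    useq μ hH2 (n + 1)
      = nextU μ hH2 (n + 1) (fun m => if h : m < n + 1 then useq μ hH2 m else 0) := by
  rw [useq]

lemma cocycle_fmap (μ : ℕ → A →ₗ[ℂ] A →ₗ[ℂ] A)
    (hμ0 : ∀ a b : A, μ 0 a b = a * b)
    (hassoc : ∀ n : ℕ, ∀ a b c : A,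
      ∑ p ∈ Finset.range (n + 1), (μ p (μ (n - p) a b) c - μ p a (μ (n - p) b c)) = 0)
    (n : ℕ) (hn : 1 ≤ n) (u : ℕ → A →ₗ[ℂ] A) (hu0 : u 0 = LinearMap.id)
    (hE : ∀ m, m < n → ∀ a b : A,
      ∑ p ∈ range (m + 1), u p (μ (m - p) a b) = ∑ p ∈ range (m + 1), u p a * u (m - p) b) :
    ∀ a b c : A, a * fmap μ u n b c - fmap μ u n (a * b) c
      + fmap μ u n a (b * c) - fmap μ u n a b * c = 0 := by
  intro a b c
  obtain ⟨f, hfdef⟩ : ∃ f : A → A → A, ∀ x y,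
      f x y = (∑ i ∈ range n, u i (μ (n - i) x y)) - ∑ i ∈ Ico 1 n, u i x * u (n - i) y :=
    ⟨_, fun _ _ => rfl⟩
  have hfm : ∀ x y : A, fmap μ u n x y = f x y := fun x y => by rw [fmap_apply, hfdef]
  have hf0 : ∀ x y : A, (∑ i ∈ range n, u i (μ (n - i) x y))
      = f x y + ∑ i ∈ Ico 1 n, u i x * u (n - i) y := fun x y => by rw [hfdef]; abel
  -- step: reflected full-row identity
  have hRefl : ∀ x y : A, (∑ q ∈ range (n + 1), u (n - q) (μ q x y))
      = f x y + (∑ i ∈ Ico 1 n, u i x * u (n - i) y) + u n (x * y) := by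
    intro x y
    conv_lhs => rw [← Finset.sum_range_reflect]
    rw [Finset.sum_range_succ]
    rw [show n + 1 - 1 - n = 0 by omega, Nat.sub_zero, hμ0]
    congr 1
    calc (∑ j ∈ range n, u (n - (n + 1 - 1 - j)) (μ (n + 1 - 1 - j) x y))
        = ∑ j ∈ range n, u j (μ (n - j) x y) := by
          refine Finset.sum_congr rfl fun j hj => ?_
          rw [Finset.mem_range] at hj
          rw [show n + 1 - 1 - j = n - j by omega, show n - (n - j) = j by omega]
      _ = f x y + ∑ i ∈ Ico 1 n, u i x * u (n - i) y := hf0 x y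
  -- the two "stars-associativity" sums agree
  have hS : (∑ i ∈ range n, ∑ p ∈ range (n - i + 1), u i (μ p (μ (n - i - p) a b) c))
      = ∑ i ∈ range n, ∑ p ∈ range (n - i + 1), u i (μ p a (μ (n - i - p) b c)) := by
    refine Finset.sum_congr rfl fun i hi => ?_
    rw [← map_sum, ← map_sum]
    congr 1
    have h := hassoc (n - i) a b c
    rw [Finset.sum_sub_distrib, sub_eq_zero] at h
    exact h
  -- generic lemma G (right constant c)
  have hG : ∀ x : ℕ → A,
      (∑ i ∈ range n, ∑ p ∈ range (n - i + 1), u i (μ p (x (n - i - p)) c))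
      = (f (x 0) c + ∑ i ∈ Ico 1 n, u i (x 0) * u (n - i) c)
        + ∑ q ∈ Ico 1 (n + 1), ∑ i ∈ range (n - q + 1), u i (x q) * u (n - q - i) c := by
    intro x
    have step1 : ∀ i, i < n → (∑ p ∈ range (n - i + 1), u i (μ p (x (n - i - p)) c))
        = ∑ q ∈ range (n + 1 - i), (if i < n then u i (μ (n - i - q) (x q) c) else 0) := by
      intro i hi
      rw [show n + 1 - i = n - i + 1 by omega]
      conv_rhs => rw [← Finset.sum_range_reflect]
      refine Finset.sum_congr rfl fun j hj => ?_
      rw [Finset.mem_range] at hj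
      rw [if_pos hi, show n - i + 1 - 1 - j = n - i - j by omega,
        show n - i - (n - i - j) = j by omega]
    calc (∑ i ∈ range n, ∑ p ∈ range (n - i + 1), u i (μ p (x (n - i - p)) c))
        = ∑ i ∈ range (n + 1), ∑ q ∈ range (n + 1 - i),
            (if i < n then u i (μ (n - i - q) (x q) c) else 0) := by
          conv_rhs => rw [Finset.sum_range_succ]
          have hz : (∑ q ∈ range (n + 1 - n), if n < n then u n (μ (n - n - q) (x q) c) else 0)
              = 0 := by simp
          rw [hz, add_zero]
          exact Finset.sum_congr rfl fun i hi => step1 i (Finset.mem_range.mp hi)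
      _ = ∑ q ∈ range (n + 1), ∑ i ∈ range (n + 1 - q),
            (if i < n then u i (μ (n - i - q) (x q) c) else 0) := tri_swap n _
      _ = (f (x 0) c + ∑ i ∈ Ico 1 n, u i (x 0) * u (n - i) c)
            + ∑ q ∈ Ico 1 (n + 1), ∑ i ∈ range (n - q + 1), u i (x q) * u (n - q - i) c := by
          rw [sum_range_head (n + 1) (by omega)]
          congr 1
          · simp only [Nat.sub_zero]
            rw [Finset.sum_range_succ, if_neg (lt_irrefl n), add_zero]
            rw [show (∑ i ∈ range n, if i < n then u i (μ (n - i) (x 0) c) else 0)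
                = ∑ i ∈ range n, u i (μ (n - i) (x 0) c) from
              Finset.sum_congr rfl fun i hi => if_pos (Finset.mem_range.mp hi)]
            exact hf0 (x 0) c
          · refine Finset.sum_congr rfl fun q hq => ?_
            rw [Finset.mem_Ico] at hq
            rw [show n + 1 - q = n - q + 1 by omega]
            rw [show (∑ i ∈ range (n - q + 1), if i < n then u i (μ (n - i - q) (x q) c) else 0)
                = ∑ i ∈ range (n - q + 1), u i (μ (n - q - i) (x q) c) from
              Finset.sum_congr rfl fun i hi => by
                rw [Finset.mem_range] at hi
                rw [if_pos (by omega), show n - i - q = n - q - i by omega]]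
            exact hE (n - q) (by omega) (x q) c
  -- generic lemma G' (left constant a)
  have hG' : ∀ x : ℕ → A,
      (∑ i ∈ range n, ∑ p ∈ range (n - i + 1), u i (μ p a (x (n - i - p))))
      = (f a (x 0) + ∑ i ∈ Ico 1 n, u i a * u (n - i) (x 0))
        + ∑ q ∈ Ico 1 (n + 1), ∑ i ∈ range (n - q + 1), u i a * u (n - q - i) (x q) := by
    intro x
    have step1 : ∀ i, i < n → (∑ p ∈ range (n - i + 1), u i (μ p a (x (n - i - p))))
        = ∑ q ∈ range (n + 1 - i), (if i < n then u i (μ (n - i - q) a (x q)) else 0) := by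
      intro i hi
      rw [show n + 1 - i = n - i + 1 by omega]
      conv_rhs => rw [← Finset.sum_range_reflect]
      refine Finset.sum_congr rfl fun j hj => ?_
      rw [Finset.mem_range] at hj
      rw [if_pos hi, show n - i + 1 - 1 - j = n - i - j by omega,
        show n - i - (n - i - j) = j by omega]
    calc (∑ i ∈ range n, ∑ p ∈ range (n - i + 1), u i (μ p a (x (n - i - p))))
        = ∑ i ∈ range (n + 1), ∑ q ∈ range (n + 1 - i),
            (if i < n then u i (μ (n - i - q) a (x q)) else 0) := by
          conv_rhs => rw [Finset.sum_range_succ]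
          have hz : (∑ q ∈ range (n + 1 - n), if n < n then u n (μ (n - n - q) a (x q)) else 0)
              = 0 := by simp
          rw [hz, add_zero]
          exact Finset.sum_congr rfl fun i hi => step1 i (Finset.mem_range.mp hi)
      _ = ∑ q ∈ range (n + 1), ∑ i ∈ range (n + 1 - q),
            (if i < n then u i (μ (n - i - q) a (x q)) else 0) := tri_swap n _
      _ = (f a (x 0) + ∑ i ∈ Ico 1 n, u i a * u (n - i) (x 0))
            + ∑ q ∈ Ico 1 (n + 1), ∑ i ∈ range (n - q + 1), u i a * u (n - q - i) (x q) := by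
          rw [sum_range_head (n + 1) (by omega)]
          congr 1
          · simp only [Nat.sub_zero]
            rw [Finset.sum_range_succ, if_neg (lt_irrefl n), add_zero]
            rw [show (∑ i ∈ range n, if i < n then u i (μ (n - i) a (x 0)) else 0)
                = ∑ i ∈ range n, u i (μ (n - i) a (x 0)) from
              Finset.sum_congr rfl fun i hi => if_pos (Finset.mem_range.mp hi)]
            exact hf0 a (x 0)
          · refine Finset.sum_congr rfl fun q hq => ?_
            rw [Finset.mem_Ico] at hq
            rw [show n + 1 - q = n - q + 1 by omega]
            rw [show (∑ i ∈ range (n - q + 1), if i < n then u i (μ (n - i - q) a (x q)) else 0)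
                = ∑ i ∈ range (n - q + 1), u i (μ (n - q - i) a (x q)) from
              Finset.sum_congr rfl fun i hi => by
                rw [Finset.mem_range] at hi
                rw [if_pos (by omega), show n - i - q = n - q - i by omega]]
            exact hE (n - q) (by omega) a (x q)
  -- hT : regrouping of the first star side
  have hswap : (∑ q ∈ range (n + 1), ∑ i ∈ range (n + 1 - q), u i (μ q a b) * u (n - q - i) c)
      = ∑ j ∈ range (n + 1), ∑ q ∈ range (n + 1 - j), u (n - q - j) (μ q a b) * u j c := by
    have h1 : ∀ q ∈ range (n + 1), (∑ i ∈ range (n + 1 - q), u i (μ q a b) * u (n - q - i) c)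
        = ∑ j ∈ range (n + 1 - q), u (n - q - j) (μ q a b) * u j c := by
      intro q hq
      rw [Finset.mem_range] at hq
      conv_rhs => rw [← Finset.sum_range_reflect]
      refine Finset.sum_congr rfl fun i hi => ?_
      rw [Finset.mem_range] at hi
      rw [show n + 1 - q - 1 - i = n - q - i by omega, show n - q - (n - q - i) = i by omega]
    rw [Finset.sum_congr rfl h1]
    exact tri_swap n fun q j => u (n - q - j) (μ q a b) * u j c
  have hFull : (∑ q ∈ range (n + 1), ∑ i ∈ range (n + 1 - q), u i (μ q a b) * u (n - q - i) c)
      = (∑ i ∈ range (n + 1), u i (a * b) * u (n - i) c)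
        + ∑ q ∈ Ico 1 (n + 1), ∑ i ∈ range (n - q + 1), u i (μ q a b) * u (n - q - i) c := by
    rw [sum_range_head (n + 1) (by omega)]
    congr 1
    · simp only [Nat.sub_zero, hμ0]
    · refine Finset.sum_congr rfl fun q hq => ?_
      rw [Finset.mem_Ico] at hq
      rw [show n + 1 - q = n - q + 1 by omega]
  have hR0 : (∑ q ∈ range (n + 1 - 0), u (n - q - 0) (μ q a b) * u 0 c)
      = (f a b + (∑ i ∈ Ico 1 n, u i a * u (n - i) b) + u n (a * b)) * c := by
    simp only [Nat.sub_zero, hu0, LinearMap.id_coe, id_eq]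
    rw [← Finset.sum_mul, hRefl]
  have hRn : (∑ q ∈ range (n + 1 - n), u (n - q - n) (μ q a b) * u n c) = a * b * u n c := by
    rw [show n + 1 - n = 1 by omega, Finset.sum_range_one, show n - 0 - n = 0 by omega,
      hμ0, hu0]
    simp
  have hRj : ∀ j ∈ Ico 1 n, (∑ q ∈ range (n + 1 - j), u (n - q - j) (μ q a b) * u j c)
      = (∑ p ∈ range (n - j + 1), u p a * u (n - j - p) b) * u j c := by
    intro j hj
    rw [Finset.mem_Ico] at hj
    rw [← Finset.sum_mul]
    congr 1
    rw [show n + 1 - j = n - j + 1 by omega, ← hE (n - j) (by omega) a b]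
    conv_rhs => rw [← Finset.sum_range_reflect]
    refine Finset.sum_congr rfl fun q hq => ?_
    rw [Finset.mem_range] at hq
    rw [show n - j + 1 - 1 - q = n - j - q by omega, show n - j - (n - j - q) = q by omega,
      show n - j - q = n - q - j by omega]
  have hrow0 : (∑ i ∈ range (n + 1), u i (a * b) * u (n - i) c)
      = a * b * u n c + ((∑ i ∈ Ico 1 n, u i (a * b) * u (n - i) c) + u n (a * b) * c) := by
    rw [sum_range_split n hn]
    simp only [hu0, LinearMap.id_coe, id_eq, Nat.sub_zero, Nat.sub_self]
  have hT : (∑ i ∈ Ico 1 n, u i (a * b) * u (n - i) c)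
      + (∑ q ∈ Ico 1 (n + 1), ∑ i ∈ range (n - q + 1), u i (μ q a b) * u (n - q - i) c)
      = f a b * c + ((∑ i ∈ Ico 1 n, u i a * u (n - i) b) * c
          + ∑ j ∈ Ico 1 n, (∑ p ∈ range (n - j + 1), u p a * u (n - j - p) b) * u j c) := by
    have e : (∑ q ∈ Ico 1 (n + 1), ∑ i ∈ range (n - q + 1), u i (μ q a b) * u (n - q - i) c)
        = (∑ j ∈ range (n + 1), ∑ q ∈ range (n + 1 - j), u (n - q - j) (μ q a b) * u j c)
          - ∑ i ∈ range (n + 1), u i (a * b) * u (n - i) c := by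
      rw [← hswap, hFull]
      abel
    rw [e, sum_range_split n hn, hR0, hRn, Finset.sum_congr rfl hRj, hrow0, add_mul, add_mul]
    abel
  -- hT' : regrouping of the second star side
  have hswap' : (∑ q ∈ range (n + 1), ∑ i ∈ range (n + 1 - q), u i a * u (n - q - i) (μ q b c))
      = ∑ i ∈ range (n + 1), ∑ q ∈ range (n + 1 - i), u i a * u (n - q - i) (μ q b c) :=
    (tri_swap n fun i q => u i a * u (n - q - i) (μ q b c)).symm
  have hFull' : (∑ q ∈ range (n + 1), ∑ i ∈ range (n + 1 - q), u i a * u (n - q - i) (μ q b c))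
      = (∑ i ∈ range (n + 1), u i a * u (n - i) (b * c))
        + ∑ q ∈ Ico 1 (n + 1), ∑ i ∈ range (n - q + 1), u i a * u (n - q - i) (μ q b c) := by
    rw [sum_range_head (n + 1) (by omega)]
    congr 1
    · simp only [Nat.sub_zero, hμ0]
    · refine Finset.sum_congr rfl fun q hq => ?_
      rw [Finset.mem_Ico] at hq
      rw [show n + 1 - q = n - q + 1 by omega]
  have hR0' : (∑ q ∈ range (n + 1 - 0), u 0 a * u (n - q - 0) (μ q b c))
      = a * (f b c + (∑ i ∈ Ico 1 n, u i b * u (n - i) c) + u n (b * c)) := by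
    simp only [Nat.sub_zero, hu0, LinearMap.id_coe, id_eq]
    rw [← Finset.mul_sum, hRefl]
  have hRn' : (∑ q ∈ range (n + 1 - n), u n a * u (n - q - n) (μ q b c)) = u n a * (b * c) := by
    rw [show n + 1 - n = 1 by omega, Finset.sum_range_one, show n - 0 - n = 0 by omega,
      hμ0, hu0]
    simp
  have hRj' : ∀ i ∈ Ico 1 n, (∑ q ∈ range (n + 1 - i), u i a * u (n - q - i) (μ q b c))
      = u i a * ∑ p ∈ range (n - i + 1), u p b * u (n - i - p) c := by
    intro i hi
    rw [Finset.mem_Ico] at hi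
    rw [← Finset.mul_sum]
    congr 1
    rw [show n + 1 - i = n - i + 1 by omega, ← hE (n - i) (by omega) b c]
    conv_rhs => rw [← Finset.sum_range_reflect]
    refine Finset.sum_congr rfl fun q hq => ?_
    rw [Finset.mem_range] at hq
    rw [show n - i + 1 - 1 - q = n - i - q by omega, show n - i - (n - i - q) = q by omega,
      show n - i - q = n - q - i by omega]
  have hrow0' : (∑ i ∈ range (n + 1), u i a * u (n - i) (b * c))
      = a * u n (b * c) + ((∑ i ∈ Ico 1 n, u i a * u (n - i) (b * c)) + u n a * (b * c)) := by
    rw [sum_range_split n hn]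
    simp only [hu0, LinearMap.id_coe, id_eq, Nat.sub_zero, Nat.sub_self]
  have hT' : (∑ i ∈ Ico 1 n, u i a * u (n - i) (b * c))
      + (∑ q ∈ Ico 1 (n + 1), ∑ i ∈ range (n - q + 1), u i a * u (n - q - i) (μ q b c))
      = a * f b c + (a * (∑ i ∈ Ico 1 n, u i b * u (n - i) c)
          + ∑ i ∈ Ico 1 n, u i a * ∑ p ∈ range (n - i + 1), u p b * u (n - i - p) c) := by
    have e : (∑ q ∈ Ico 1 (n + 1), ∑ i ∈ range (n - q + 1), u i a * u (n - q - i) (μ q b c))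
        = (∑ i ∈ range (n + 1), ∑ q ∈ range (n + 1 - i), u i a * u (n - q - i) (μ q b c))
          - ∑ i ∈ range (n + 1), u i a * u (n - i) (b * c) := by
      rw [← hswap', hFull']
      abel
    rw [e, sum_range_split n hn, hR0', hRn', Finset.sum_congr rfl hRj', hrow0', mul_add, mul_add]
    abel
  -- hP : the two "cubic" terms agree
  have hP1 : (∑ k ∈ range (n + 1), ∑ i ∈ range (n + 1 - k), u i a * u (n - k - i) b * u k c)
      = ((∑ i ∈ Ico 1 n, u i a * u (n - i) b) * c
          + ∑ j ∈ Ico 1 n, (∑ p ∈ range (n - j + 1), u p a * u (n - j - p) b) * u j c)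
        + (a * u n b * c + (u n a * b * c + a * b * u n c)) := by
    rw [sum_range_split n hn]
    have h0 : (∑ i ∈ range (n + 1 - 0), u i a * u (n - 0 - i) b * u 0 c)
        = a * u n b * c + ((∑ i ∈ Ico 1 n, u i a * u (n - i) b) * c + u n a * b * c) := by
      simp only [Nat.sub_zero]
      rw [sum_range_split n hn]
      simp only [hu0, LinearMap.id_coe, id_eq, Nat.sub_zero, Nat.sub_self]
      rw [← Finset.sum_mul]
    have hnn : (∑ i ∈ range (n + 1 - n), u i a * u (n - n - i) b * u n c) = a * b * u n c := by
      rw [show n + 1 - n = 1 by omega, Finset.sum_range_one, show n - n - 0 = 0 by omega]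
      simp [hu0]
    have hmid : ∀ k ∈ Ico 1 n, (∑ i ∈ range (n + 1 - k), u i a * u (n - k - i) b * u k c)
        = (∑ p ∈ range (n - k + 1), u p a * u (n - k - p) b) * u k c := by
      intro k hk
      rw [Finset.mem_Ico] at hk
      rw [show n + 1 - k = n - k + 1 by omega, Finset.sum_mul]
    rw [h0, hnn, Finset.sum_congr rfl hmid]
    abel
  have hP2 : (∑ k ∈ range (n + 1), ∑ i ∈ range (n + 1 - k), u i a * u (n - k - i) b * u k c)
      = (a * (∑ i ∈ Ico 1 n, u i b * u (n - i) c)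
          + ∑ i ∈ Ico 1 n, u i a * ∑ p ∈ range (n - i + 1), u p b * u (n - i - p) c)
        + (a * u n b * c + (u n a * b * c + a * b * u n c)) := by
    rw [tri_swap n (fun k i => u i a * u (n - k - i) b * u k c)]
    rw [sum_range_split n hn]
    have h0 : (∑ k ∈ range (n + 1 - 0), u 0 a * u (n - k - 0) b * u k c)
        = a * u n b * c + (a * (∑ i ∈ Ico 1 n, u i b * u (n - i) c) + a * b * u n c) := by
      simp only [Nat.sub_zero]
      rw [sum_range_split n hn]
      simp only [hu0, LinearMap.id_coe, id_eq, Nat.sub_zero, Nat.sub_self]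
      congr 1
      congr 1
      rw [Finset.mul_sum, sum_Ico_reflect' n (fun j => a * (u j b * u (n - j) c))]
      refine Finset.sum_congr rfl fun k hk => ?_
      rw [Finset.mem_Ico] at hk
      rw [show n - (n - k) = k by omega, ← mul_assoc]
    have hnn : (∑ k ∈ range (n + 1 - n), u n a * u (n - k - n) b * u k c) = u n a * b * c := by
      rw [show n + 1 - n = 1 by omega, Finset.sum_range_one, show n - 0 - n = 0 by omega]
      simp [hu0]
    have hmid : ∀ i ∈ Ico 1 n, (∑ k ∈ range (n + 1 - i), u i a * u (n - k - i) b * u k c)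
        = u i a * ∑ p ∈ range (n - i + 1), u p b * u (n - i - p) c := by
      intro i hi
      rw [Finset.mem_Ico] at hi
      rw [show n + 1 - i = n - i + 1 by omega, Finset.mul_sum]
      conv_rhs => rw [← Finset.sum_range_reflect]
      refine Finset.sum_congr rfl fun k hk => ?_
      rw [Finset.mem_range] at hk
      rw [show n - i + 1 - 1 - k = n - i - k by omega, show n - i - (n - i - k) = k by omega,
        show n - i - k = n - k - i by omega, ← mul_assoc]
    rw [h0, hnn, Finset.sum_congr rfl hmid]
    abel
  have hP : ((∑ i ∈ Ico 1 n, u i a * u (n - i) b) * c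
        + ∑ j ∈ Ico 1 n, (∑ p ∈ range (n - j + 1), u p a * u (n - j - p) b) * u j c)
      = (a * (∑ i ∈ Ico 1 n, u i b * u (n - i) c)
        + ∑ i ∈ Ico 1 n, u i a * ∑ p ∈ range (n - i + 1), u p b * u (n - i - p) c) :=
    add_right_cancel (hP1.symm.trans hP2)
  -- final assembly
  have hGw := hG (fun q => μ q a b)
  simp only [hμ0] at hGw
  have hGv := hG' (fun q => μ q b c)
  simp only [hμ0] at hGv
  have e1 : (∑ i ∈ range n, ∑ p ∈ range (n - i + 1), u i (μ p (μ (n - i - p) a b) c))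
      = f (a * b) c + (f a b * c + ((∑ i ∈ Ico 1 n, u i a * u (n - i) b) * c
          + ∑ j ∈ Ico 1 n, (∑ p ∈ range (n - j + 1), u p a * u (n - j - p) b) * u j c)) := by
    rw [hGw, add_assoc, hT]
  have e2 : (∑ i ∈ range n, ∑ p ∈ range (n - i + 1), u i (μ p a (μ (n - i - p) b c)))
      = f a (b * c) + (a * f b c + (a * (∑ i ∈ Ico 1 n, u i b * u (n - i) c)
          + ∑ i ∈ Ico 1 n, u i a * ∑ p ∈ range (n - i + 1), u p b * u (n - i - p) c)) := by
    rw [hGv, add_assoc, hT']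
  have key := e1.symm.trans (hS.trans e2)
  have final : a * f b c - f (a * b) c + f a (b * c) - f a b * c
      = (f a (b * c) + (a * f b c + (a * (∑ i ∈ Ico 1 n, u i b * u (n - i) c)
          + ∑ i ∈ Ico 1 n, u i a * ∑ p ∈ range (n - i + 1), u p b * u (n - i - p) c)))
        - (f (a * b) c + (f a b * c + ((∑ i ∈ Ico 1 n, u i a * u (n - i) b) * c
          + ∑ j ∈ Ico 1 n, (∑ p ∈ range (n - j + 1), u p a * u (n - j - p) b) * u j c))) := by
    rw [hP]
    abel
  simp only [hfm]
  rw [final, ← key, sub_self]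

end Defs

/-- If every Hochschild 2-cocycle of a ℂ-algebra `A` (with coefficients in `A`) is a
coboundary (i.e. `H²(A, A) = 0`), then every one-parameter formal deformation of `A` —
given by its family of coefficient bilinear maps `μₙ` with `μ₀` the product of `A`,
satisfying the associativity equations and having `1 ∈ A` as unit — is trivial:
it is equivalent to the constant deformation via `φ = Σ uₙ hⁿ` with `u₀ = id`. -/
theorem deformation_trivial_of_H2_eq_zero (A : Type*) [Ring A] [Algebra ℂ A]
    (hH2 : ∀ f : A →ₗ[ℂ] A →ₗ[ℂ] A,
      (∀ a b c : A, a * f b c - f (a * b) c + f a (b * c) - f a b * c = 0) →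
      ∃ g : A →ₗ[ℂ] A, ∀ a b : A, f a b = a * g b - g (a * b) + g a * b)
    (μ : ℕ → A →ₗ[ℂ] A →ₗ[ℂ] A)
    (hμ0 : ∀ a b : A, μ 0 a b = a * b)
    (hassoc : ∀ n : ℕ, ∀ a b c : A,
      ∑ p ∈ Finset.range (n + 1), (μ p (μ (n - p) a b) c - μ p a (μ (n - p) b c)) = 0)
    (hunit : ∀ n : ℕ, 0 < n → ∀ a : A, μ n 1 a = 0 ∧ μ n a 1 = 0) :
    ∃ u : ℕ → A →ₗ[ℂ] A, u 0 = LinearMap.id ∧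
      ∀ n : ℕ, ∀ a b : A,
        ∑ p ∈ Finset.range (n + 1), u p (μ (n - p) a b) =
          ∑ p ∈ Finset.range (n + 1), u p a * u (n - p) b := by
  refine ⟨useq μ hH2, useq_zero μ hH2, ?_⟩
  intro n
  induction n using Nat.strong_induction_on with
  | _ n ih =>
    obtain _ | m := n
    · intro a b
      simp [useq_zero, hμ0]
    · intro a b
      set N := m + 1 with hN
      set prev : ℕ → A →ₗ[ℂ] A := fun k => if h : k < N then useq μ hH2 k else 0 with hprev
      have h1 : ∀ p, p < N → prev p = useq μ hH2 p := fun p hp => by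
        rw [hprev]; exact dif_pos hp
      have hu0p : prev 0 = LinearMap.id := by
        rw [h1 0 (by omega), useq_zero]
      have hEp : ∀ k, k < N → ∀ x y : A,
          ∑ p ∈ range (k + 1), prev p (μ (k - p) x y)
            = ∑ p ∈ range (k + 1), prev p x * prev (k - p) y := by
        intro k hk x y
        calc ∑ p ∈ range (k + 1), prev p (μ (k - p) x y)
            = ∑ p ∈ range (k + 1), useq μ hH2 p (μ (k - p) x y) :=
              Finset.sum_congr rfl fun p hp => by
                rw [Finset.mem_range] at hp
                rw [h1 p (by omega)]
          _ = ∑ p ∈ range (k + 1), useq μ hH2 p x * useq μ hH2 (k - p) y := ih k hk x y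
          _ = ∑ p ∈ range (k + 1), prev p x * prev (k - p) y :=
              Finset.sum_congr rfl fun p hp => by
                rw [Finset.mem_range] at hp
                rw [h1 p (by omega), h1 (k - p) (by omega)]
      have hcoc := cocycle_fmap μ hμ0 hassoc N (by omega) prev hu0p hEp
      have hgdef : useq μ hH2 N = nextU μ hH2 N prev := by
        rw [hprev]
        exact useq_succ μ hH2 m
      rw [nextU, dif_pos hcoc] at hgdef
      have hspec := Classical.choose_spec (hH2 (fmap μ prev N) hcoc)
      rw [← hgdef] at hspec
      have hfa := hspec a b
      rw [fmap_apply,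
        show (∑ i ∈ range N, prev i (μ (N - i) a b))
            = ∑ i ∈ range N, useq μ hH2 i (μ (N - i) a b) from
          Finset.sum_congr rfl fun i hi => by rw [h1 i (Finset.mem_range.mp hi)],
        show (∑ i ∈ Ico 1 N, prev i a * prev (N - i) b)
            = ∑ i ∈ Ico 1 N, useq μ hH2 i a * useq μ hH2 (N - i) b from
          Finset.sum_congr rfl fun i hi => by
            rw [Finset.mem_Ico] at hi
            rw [h1 i hi.2, h1 (N - i) (by omega)]] at hfa
      rw [Finset.sum_range_succ, sum_range_split N (by omega)]
      simp only [Nat.sub_self, Nat.sub_zero, hμ0, useq_zero, LinearMap.id_coe, id_eq]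
      rw [sub_eq_iff_eq_add] at hfa
      rw [hfa]
      abel
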